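/- Knight's identity: for the check function h_γ(t) = t(γ - 1{t ≤ 0}) with γ ∈ (0,1), and any real numbers w and v, h_γ(w - v) - h_γ(w) = -v(γ - 1{w ≤ 0}) + ∫_0^v (1{w ≤ z} - 1{w ≤ 0}) dz. -/
import Mathlib


noncomputable def checkFn (γ t : ℝ) : ℝ := t * (γ - if t ≤ 0 then 1 else 0)

lemma ind_intervalIntegrable (w a b : ℝ) :
    IntervalIntegrable (fun z => if w ≤ z then (1:ℝ) else 0) MeasureTheory.volume a b := by
  apply Monotone.intervalIntegrable
  intro x y hxy
  by_cases h : w ≤ x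
  · simp [h, h.trans hxy]
  · simp [h]; positivity

lemma ind_integral_le (w a b : ℝ) (hab : a ≤ b) :
    ∫ z in a..b, (if w ≤ z then (1:ℝ) else 0) = max (b - w) 0 - max (a - w) 0 := by
  rcases le_total b w with hbw | hwb
  · have h0 : ∫ z in a..b, (if w ≤ z then (1:ℝ) else 0) = ∫ z in a..b, (0:ℝ) := by
      apply intervalIntegral.integral_congr_ae
      have hne : ∀ᵐ x : ℝ, x ≠ w := by
        rw [MeasureTheory.ae_iff]
        simp [not_not]
      filter_upwards [hne] with x hx hmem
      rw [Set.uIoc_of_le hab] at hmem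
      have : ¬ (w ≤ x) := by
        intro hwx
        exact hx (le_antisymm (hmem.2.trans hbw) hwx)
      simp [this]
    rw [h0]
    have h1 : max (b - w) 0 = 0 := max_eq_right (by linarith)
    have h2 : max (a - w) 0 = 0 := max_eq_right (by linarith)
    simp [h1, h2]
  · rcases le_total w a with hwa | haw
    · have h0 : ∫ z in a..b, (if w ≤ z then (1:ℝ) else 0) = ∫ z in a..b, (1:ℝ) := by
        apply intervalIntegral.integral_congr
        intro x hx
        rw [Set.uIcc_of_le hab] at hx
        simp [hwa.trans hx.1]
      rw [h0]
      have h1 : max (b - w) 0 = b - w := max_eq_left (by linarith)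
      have h2 : max (a - w) 0 = a - w := max_eq_left (by linarith)
      simp [h1, h2, mul_comm]
    · have hsplit : ∫ z in a..b, (if w ≤ z then (1:ℝ) else 0) =
          (∫ z in a..w, (if w ≤ z then (1:ℝ) else 0)) +
          ∫ z in w..b, (if w ≤ z then (1:ℝ) else 0) :=
        (intervalIntegral.integral_add_adjacent_intervals
          (ind_intervalIntegrable w a w) (ind_intervalIntegrable w w b)).symm
      have hA : ∫ z in a..w, (if w ≤ z then (1:ℝ) else 0) = 0 := by
        have h0 : ∫ z in a..w, (if w ≤ z then (1:ℝ) else 0) = ∫ z in a..w, (0:ℝ) := by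
          apply intervalIntegral.integral_congr_ae
          have hne : ∀ᵐ x : ℝ, x ≠ w := by
            rw [MeasureTheory.ae_iff]
            simp [not_not]
          filter_upwards [hne] with x hx hmem
          rw [Set.uIoc_of_le haw] at hmem
          have : ¬ (w ≤ x) := fun hwx => hx (le_antisymm hmem.2 hwx)
          simp [this]
        simp [h0]
      have hB : ∫ z in w..b, (if w ≤ z then (1:ℝ) else 0) = b - w := by
        have h0 : ∫ z in w..b, (if w ≤ z then (1:ℝ) else 0) = ∫ z in w..b, (1:ℝ) := by
          apply intervalIntegral.integral_congr
          intro x hx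
          rw [Set.uIcc_of_le hwb] at hx
          simp [hx.1]
        rw [h0]; simp
      rw [hsplit, hA, hB]
      have h1 : max (b - w) 0 = b - w := max_eq_left (by linarith)
      have h2 : max (a - w) 0 = 0 := max_eq_right (by linarith)
      rw [h1, h2]; ring

lemma ind_integral (w a b : ℝ) :
    ∫ z in a..b, (if w ≤ z then (1:ℝ) else 0) = max (b - w) 0 - max (a - w) 0 := by
  rcases le_total a b with h | h
  · exact ind_integral_le w a b h
  · rw [intervalIntegral.integral_symm, ind_integral_le w b a h]
    ring

theorem stmt_2 (γ : ℝ) (hγ : γ ∈ Set.Ioo (0:ℝ) 1) (w v : ℝ) :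
    checkFn γ (w - v) - checkFn γ w =
      -v * (γ - if w ≤ 0 then 1 else 0) +
        ∫ z in (0:ℝ)..v, ((if w ≤ z then (1:ℝ) else 0) - (if w ≤ 0 then (1:ℝ) else 0)) := by
  have hint : ∫ z in (0:ℝ)..v, ((if w ≤ z then (1:ℝ) else 0) - (if w ≤ 0 then (1:ℝ) else 0)) =
      (∫ z in (0:ℝ)..v, (if w ≤ z then (1:ℝ) else 0)) - v * (if w ≤ 0 then (1:ℝ) else 0) := by
    rw [intervalIntegral.integral_sub (ind_intervalIntegrable w 0 v)
      (intervalIntegrable_const)]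
    simp [mul_comm]
  rw [hint, ind_integral]
  unfold checkFn
  rcases le_or_gt w 0 with hw0 | hw0 <;> rcases le_or_gt w v with hwv | hwv
  · rw [if_pos hw0, if_pos (by linarith : w - v ≤ 0),
      max_eq_left (by linarith), max_eq_left (by linarith)]
    ring
  · rw [if_pos hw0, if_neg (by linarith : ¬ w - v ≤ 0),
      max_eq_right (by linarith), max_eq_left (by linarith)]
    ring
  · rw [if_neg (not_le.mpr hw0), if_pos (by linarith : w - v ≤ 0),
      max_eq_left (by linarith), max_eq_right (by linarith)]
    ring
  · rw [if_neg (not_le.mpr hw0), if_neg (by linarith : ¬ w - v ≤ 0),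
      max_eq_right (by linarith), max_eq_right (by linarith)]
    ring
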